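/- arXiv:2004.11323 — 2 statements merged into one kernel-verified Lean document; each statement's English description precedes it below -/
import Mathlib

section
/- For any Morse gauge $N$ there exists a Morse gauge $N'$, depending only on $N$, such that every subsegment (restriction to a subinterval) of an $N$-Morse geodesic is $N'$-Morse. -/
open Metric Set Filter

noncomputable section

/-- Gromov product of `x` and `y` with respect to `w`. -/
def gp {X : Type*} [MetricSpace X] (w x y : X) : ℝ :=
  (dist w x + dist w y - dist x y) / 2

/-- `X` is `δ`-hyperbolic in the Gromov-product sense. -/
def GromovHyp (X : Type*) [MetricSpace X] (δ : ℝ) : Prop :=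
  ∀ w x y z : X, min (gp w x z) (gp w z y) - δ ≤ gp w x y

/-- `γ` restricted to `s` is a (unit-speed) geodesic. -/
def IsGeodesicOn {X : Type*} [MetricSpace X] (γ : ℝ → X) (s : Set ℝ) : Prop :=
  ∀ a ∈ s, ∀ b ∈ s, dist (γ a) (γ b) = |a - b|

/-- `α` restricted to `s` is a `(K, C)`-quasi-geodesic. -/
def IsQGeodesicOn {X : Type*} [MetricSpace X] (K C : ℝ) (α : ℝ → X) (s : Set ℝ) : Prop :=
  ∀ a ∈ s, ∀ b ∈ s,
    K⁻¹ * |a - b| - C ≤ dist (α a) (α b) ∧ dist (α a) (α b) ≤ K * |a - b| + C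

/-- A Morse gauge, i.e. a function `[1,∞) × [0,∞) → [0,∞)` (extended to all of `ℝ²`). -/
abbrev MorseGauge : Type := ℝ → ℝ → ℝ

/-- `γ` (restricted to `s`) is an `N`-Morse geodesic: every `(K,C)`-quasi-geodesic with
endpoints on `γ` stays in the `N K C`-neighborhood of `γ`. -/
def IsMorseOn {X : Type*} [MetricSpace X] (N : MorseGauge) (γ : ℝ → X) (s : Set ℝ) : Prop :=
  ∀ K C : ℝ, 1 ≤ K → 0 ≤ C → ∀ a b : ℝ, a ≤ b → ∀ α : ℝ → X,
    IsQGeodesicOn K C α (Set.Icc a b) → α a ∈ γ '' s → α b ∈ γ '' s →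
    ∀ t ∈ Set.Icc a b, infDist (α t) (γ '' s) ≤ N K C

/-- `X` is a geodesic metric space. -/
def GeodesicSpace (X : Type*) [MetricSpace X] : Prop :=
  ∀ x y : X, ∃ γ : ℝ → X,
    γ 0 = x ∧ γ (dist x y) = y ∧ IsGeodesicOn γ (Set.Icc 0 (dist x y))

/-- `h` is a `(K, C)`-quasi-isometry. -/
def IsQI {X Y : Type*} [MetricSpace X] [MetricSpace Y] (K C : ℝ) (h : X → Y) : Prop :=
  (∀ x₁ x₂ : X,
      K⁻¹ * dist x₁ x₂ - C ≤ dist (h x₁) (h x₂) ∧ dist (h x₁) (h x₂) ≤ K * dist x₁ x₂ + C) ∧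
  ∀ y : Y, ∃ x : X, dist y (h x) ≤ C

/-! ### The sequential (Gromov) boundary -/

/-- The sequence `u` converges at infinity (with respect to basepoint `p`). -/
def ConvInf {X : Type*} [MetricSpace X] (p : X) (u : ℕ → X) : Prop :=
  Tendsto (fun nm : ℕ × ℕ => gp p (u nm.1) (u nm.2)) atTop atTop

/-- Two sequences converging at infinity are equivalent. -/
def SeqEquiv {X : Type*} [MetricSpace X] (p : X) (u v : ℕ → X) : Prop :=
  Tendsto (fun nm : ℕ × ℕ => gp p (u nm.1) (v nm.2)) atTop atTop

/-- `liminf` (as `n, m → ∞`) of the Gromov products of terms of two sequences. -/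
def pliminf {X : Type*} [MetricSpace X] (p : X) (u v : ℕ → X) : EReal :=
  Filter.liminf (fun nm : ℕ × ℕ => ((gp p (u nm.1) (v nm.2) : ℝ) : EReal)) atTop

def BSeq {X : Type*} [MetricSpace X] (p : X) : Type _ := {u : ℕ → X // ConvInf p u}

/-- The sequential boundary with respect to basepoint `p`. -/
def GBoundary {X : Type*} [MetricSpace X] (p : X) : Type _ :=
  Quot (fun u v : BSeq p => SeqEquiv p u.1 v.1)

def GBmk {X : Type*} [MetricSpace X] (p : X) (u : BSeq p) : GBoundary p := Quot.mk _ u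

/-- Gromov product of two boundary points: supremum over representative sequences
of the `liminf` of Gromov products. -/
def bprod {X : Type*} [MetricSpace X] (p : X) (x y : GBoundary p) : EReal :=
  sSup {t : EReal | ∃ u v : BSeq p, GBmk p u = x ∧ GBmk p v = y ∧ t = pliminf p u.1 v.1}

/-- Gromov product on `X ∪ ∂X`. -/
def eprod {X : Type*} [MetricSpace X] (p : X) :
    X ⊕ GBoundary p → X ⊕ GBoundary p → EReal
  | Sum.inl x, Sum.inl y => ((gp p x y : ℝ) : EReal)
  | Sum.inl x, Sum.inr b =>
      sSup {t : EReal | ∃ v : BSeq p, GBmk p v = b ∧ t = pliminf p (fun _ => x) v.1}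
  | Sum.inr a, Sum.inl y =>
      sSup {t : EReal | ∃ u : BSeq p, GBmk p u = a ∧ t = pliminf p u.1 (fun _ => y)}
  | Sum.inr a, Sum.inr b => bprod p a b

/-- `e^{-ε t}`, with the convention `e^{-ε ⋅ ∞} = 0`. -/
def expNeg (ε : ℝ) (t : EReal) : ℝ := if t = ⊤ then 0 else Real.exp (-ε * t.toReal)

/-- The chain (visual) metric `d_{p,ε}` on the boundary. -/
def visDist {X : Type*} [MetricSpace X] (p : X) (ε : ℝ) (x y : GBoundary p) : ℝ :=
  sInf {s : ℝ | ∃ (n : ℕ) (c : ℕ → GBoundary p), c 0 = x ∧ c n = y ∧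
    s = ∑ i ∈ Finset.range n, expNeg ε (bprod p (c i) (c (i + 1)))}

/-! ### Basepoint-free sequential boundary -/

def ConvInfF {X : Type*} [MetricSpace X] (u : ℕ → X) : Prop := ∀ p : X, ConvInf p u

def SeqEquivF {X : Type*} [MetricSpace X] (u v : ℕ → X) : Prop := ∀ p : X, SeqEquiv p u v

def BSeqF (X : Type*) [MetricSpace X] : Type _ := {u : ℕ → X // ConvInfF u}

def GBoundaryF (X : Type*) [MetricSpace X] : Type _ :=
  Quot (fun u v : BSeqF X => SeqEquivF u.1 v.1)

def GBFmk {X : Type*} [MetricSpace X] (u : BSeqF X) : GBoundaryF X := Quot.mk _ u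

def bprodF {X : Type*} [MetricSpace X] (p : X) (x y : GBoundaryF X) : EReal :=
  sSup {t : EReal | ∃ u v : BSeqF X, GBFmk u = x ∧ GBFmk v = y ∧ t = pliminf p u.1 v.1}

def visDistF {X : Type*} [MetricSpace X] (p : X) (ε : ℝ) (x y : GBoundaryF X) : ℝ :=
  sInf {s : ℝ | ∃ (n : ℕ) (c : ℕ → GBoundaryF X), c 0 = x ∧ c n = y ∧
    s = ∑ i ∈ Finset.range n, expNeg ε (bprodF p (c i) (c (i + 1)))}

/-! ### The Morse boundary -/

/-- A Morse geodesic ray. -/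
structure MorseRay (X : Type*) [MetricSpace X] where
  ray : ℝ → X
  geo : IsGeodesicOn ray (Set.Ici 0)
  morse : ∃ N : MorseGauge, IsMorseOn N ray (Set.Ici 0)

/-- Two subsets are at finite Hausdorff distance. -/
def AsympSets {X : Type*} [MetricSpace X] (A B : Set X) : Prop :=
  EMetric.hausdorffEdist A B ≠ ⊤

/-- The Morse boundary: Morse geodesic rays modulo finite Hausdorff distance. -/
def MorseBoundary (X : Type*) [MetricSpace X] : Type _ :=
  Quot (fun r r' : MorseRay X => AsympSets (r.ray '' Set.Ici 0) (r'.ray '' Set.Ici 0))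

def MBmk {X : Type*} [MetricSpace X] (r : MorseRay X) : MorseBoundary X := Quot.mk _ r

/-- `γ` (restricted to `[0,∞)`) is asymptotic to the Morse boundary point `p`. -/
def Asymp {X : Type*} [MetricSpace X] (γ : ℝ → X) (p : MorseBoundary X) : Prop :=
  ∃ r : MorseRay X, MBmk r = p ∧ AsympSets (γ '' Set.Ici 0) (r.ray '' Set.Ici 0)

/-- The bi-infinite geodesic `γ` joins the Morse boundary points `a` and `b`. -/
def Joins {X : Type*} [MetricSpace X] (γ : ℝ → X) (a b : MorseBoundary X) : Prop :=
  IsGeodesicOn γ Set.univ ∧ Asymp γ b ∧ Asymp (fun t => γ (-t)) a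

/-- `(a,b,c) ∈ ∂*X^{(3,N)}`: distinct points, all connecting geodesics `N`-Morse. -/
def Triple3 {X : Type*} [MetricSpace X] (N : MorseGauge) (a b c : MorseBoundary X) : Prop :=
  a ≠ b ∧ b ≠ c ∧ a ≠ c ∧
  (∀ γ : ℝ → X, Joins γ a b → IsMorseOn N γ Set.univ) ∧
  (∀ γ : ℝ → X, Joins γ b c → IsMorseOn N γ Set.univ) ∧
  (∀ γ : ℝ → X, Joins γ c a → IsMorseOn N γ Set.univ)

/-- `(p,q) ∈ ∂*X^{(2,N)}`: all connecting bi-infinite geodesics are `N`-Morse. -/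
def Pair2 {X : Type*} [MetricSpace X] (N : MorseGauge) (p q : MorseBoundary X) : Prop :=
  ∀ γ : ℝ → X, Joins γ p q → IsMorseOn N γ Set.univ

/-- `E_k(a,b,c)`: points within `k` of all three sides of some ideal triangle on `(a,b,c)`. -/
def Ek {X : Type*} [MetricSpace X] (k : ℝ) (a b c : MorseBoundary X) : Set X :=
  {x | ∃ γab γbc γca : ℝ → X, Joins γab a b ∧ Joins γbc b c ∧ Joins γca c a ∧
    infDist x (Set.range γab) ≤ k ∧ infDist x (Set.range γbc) ≤ k ∧
    infDist x (Set.range γca) ≤ k}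

/-- `K(a,b,c) = 1 + inf {k | E_k(a,b,c) ≠ ∅}`. -/
def Kconst {X : Type*} [MetricSpace X] (a b c : MorseBoundary X) : ℝ :=
  1 + sInf {k : ℝ | (Ek k a b c).Nonempty}

/-- The set of coarse centers of the ideal triangle on `(a,b,c)`. -/
def Ecen {X : Type*} [MetricSpace X] (a b c : MorseBoundary X) : Set X :=
  Ek (Kconst a b c) a b c

/-! ### Generalized triangles with vertices in `X ∪ ∂*X` -/

/-- Parameter domain of a side joining two (possibly ideal) vertices. -/
def sideDom {X : Type*} [MetricSpace X] :
    X ⊕ MorseBoundary X → X ⊕ MorseBoundary X → Set ℝ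
  | Sum.inl x, Sum.inl y => Set.Icc 0 (dist x y)
  | Sum.inl _, Sum.inr _ => Set.Ici 0
  | Sum.inr _, Sum.inl _ => Set.Ici 0
  | Sum.inr _, Sum.inr _ => Set.univ

/-- `γ` is a geodesic side joining the two (possibly ideal) vertices. -/
def SideJoins {X : Type*} [MetricSpace X] (γ : ℝ → X) :
    X ⊕ MorseBoundary X → X ⊕ MorseBoundary X → Prop
  | Sum.inl x, Sum.inl y =>
      IsGeodesicOn γ (Set.Icc 0 (dist x y)) ∧ γ 0 = x ∧ γ (dist x y) = y
  | Sum.inl x, Sum.inr b => IsGeodesicOn γ (Set.Ici 0) ∧ γ 0 = x ∧ Asymp γ b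
  | Sum.inr a, Sum.inl y => IsGeodesicOn γ (Set.Ici 0) ∧ γ 0 = y ∧ Asymp γ a
  | Sum.inr a, Sum.inr b => Joins γ a b

/-! ### Stability notions for boundary maps -/

/-- `f` is 2-stable. -/
def TwoStable {X Y : Type*} [MetricSpace X] [MetricSpace Y]
    (f : MorseBoundary X → MorseBoundary Y) : Prop :=
  ∀ N : MorseGauge, ∃ N' : MorseGauge, ∀ p q : MorseBoundary X,
    Pair2 N p q → Pair2 N' (f p) (f q)

/-- `p` belongs to `∂X_{x₀}^{(N)}`: some Morse ray from `x₀` represents `p`, and every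
geodesic ray from `x₀` representing `p` is `N`-Morse. -/
def InMB {X : Type*} [MetricSpace X] (x₀ : X) (N : MorseGauge) (p : MorseBoundary X) : Prop :=
  (∃ r : MorseRay X, MBmk r = p ∧ r.ray 0 = x₀) ∧
  ∀ r : MorseRay X, MBmk r = p → r.ray 0 = x₀ → IsMorseOn N r.ray (Set.Ici 0)

/-- `f` is `N₀`-basetriangle stable. -/
def BTStableAt {X Y : Type*} [MetricSpace X] [MetricSpace Y] (N₀ : MorseGauge)
    (f : MorseBoundary X → MorseBoundary Y) : Prop :=
  ∀ N : MorseGauge, ∃ N' : MorseGauge, ∀ a b c : MorseBoundary X, Triple3 N₀ a b c →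
    ∀ x₀ ∈ Ecen a b c, ∀ y₀ ∈ Ecen (f a) (f b) (f c),
      ∀ p : MorseBoundary X, InMB x₀ N p → InMB y₀ N' (f p)

/-- A group acts cocompactly by isometries on `X`. -/
def CocompactSpace' (X : Type*) [MetricSpace X] : Prop :=
  ∃ (G : Subgroup (X ≃ᵢ X)) (K : Set X), IsCompact K ∧ ∀ x : X, ∃ g ∈ G, g x ∈ K

/-- `F` is the boundary map induced by `h : X → Y`. -/
def IsInduced {X Y : Type*} [MetricSpace X] [MetricSpace Y] (h : X → Y)
    (F : MorseBoundary X → MorseBoundary Y) : Prop :=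
  ∀ (r : MorseRay X) (r' : MorseRay Y),
    AsympSets ((fun t => h (r.ray t)) '' Set.Ici 0) (r'.ray '' Set.Ici 0) →
    F (MBmk r) = MBmk r'

/-! ### The metric Morse boundaries `∂X_{x₀}^{(N)}` -/

/-- `X_{x₀}^{(N)}`: points all of whose geodesics to `x₀` are `N`-Morse. -/
def MSet {X : Type*} [MetricSpace X] (x₀ : X) (N : MorseGauge) : Set X :=
  {x | ∀ γ : ℝ → X, γ 0 = x₀ → γ (dist x₀ x) = x →
      IsGeodesicOn γ (Set.Icc 0 (dist x₀ x)) → IsMorseOn N γ (Set.Icc 0 (dist x₀ x))}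

/-- Sequences in `X_{x₀}^{(N)}` converging at infinity. -/
def MBSeq {X : Type*} [MetricSpace X] (x₀ : X) (N : MorseGauge) : Type _ :=
  {u : ℕ → X // (∀ n, u n ∈ MSet x₀ N) ∧ ConvInf x₀ u}

/-- The sequential boundary `∂X_{x₀}^{(N)}`. -/
def MBoundaryN {X : Type*} [MetricSpace X] (x₀ : X) (N : MorseGauge) : Type _ :=
  Quot (fun u v : MBSeq x₀ N => SeqEquiv x₀ u.1 v.1)

def MNmk {X : Type*} [MetricSpace X] (x₀ : X) (N : MorseGauge) (u : MBSeq x₀ N) :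
    MBoundaryN x₀ N := Quot.mk _ u

/-- The `N`-Gromov product `(x ⬝_N y)_{x₀}` on `∂X_{x₀}^{(N)}`. -/
def mprod {X : Type*} [MetricSpace X] (x₀ : X) (N : MorseGauge)
    (x y : MBoundaryN x₀ N) : EReal :=
  sSup {t : EReal | ∃ u v : MBSeq x₀ N,
    MNmk x₀ N u = x ∧ MNmk x₀ N v = y ∧ t = pliminf x₀ u.1 v.1}

/-- The visual metric `d_{x₀, ε_N}` on `∂X_{x₀}^{(N)}`. -/
def mvisDist {X : Type*} [MetricSpace X] (x₀ : X) (N : MorseGauge) (ε : ℝ)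
    (x y : MBoundaryN x₀ N) : ℝ :=
  sInf {s : ℝ | ∃ (n : ℕ) (c : ℕ → MBoundaryN x₀ N), c 0 = x ∧ c n = y ∧
    s = ∑ i ∈ Finset.range n, expNeg ε (mprod x₀ N (c i) (c (i + 1)))}

/-- The bi-infinite geodesic `γ` joins the points `a b ∈ ∂X_{x₀}^{(N)}`. -/
def MJoins {X : Type*} [MetricSpace X] (x₀ : X) (N : MorseGauge) (γ : ℝ → X)
    (a b : MBoundaryN x₀ N) : Prop :=
  IsGeodesicOn γ Set.univ ∧
  (∃ u : MBSeq x₀ N, MNmk x₀ N u = b ∧ SeqEquiv x₀ (fun n : ℕ => γ n) u.1) ∧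
  (∃ u : MBSeq x₀ N, MNmk x₀ N u = a ∧ SeqEquiv x₀ (fun n : ℕ => γ (-(n : ℝ))) u.1)

/-- `E_k(a,b,c)` for `a, b, c ∈ ∂X_{x₀}^{(N)}`. -/
def MEk {X : Type*} [MetricSpace X] (x₀ : X) (N : MorseGauge) (k : ℝ)
    (a b c : MBoundaryN x₀ N) : Set X :=
  {x | ∃ γab γbc γca : ℝ → X,
    MJoins x₀ N γab a b ∧ MJoins x₀ N γbc b c ∧ MJoins x₀ N γca c a ∧
    infDist x (Set.range γab) ≤ k ∧ infDist x (Set.range γbc) ≤ k ∧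
    infDist x (Set.range γca) ≤ k}

def MKconst {X : Type*} [MetricSpace X] (x₀ : X) (N : MorseGauge)
    (a b c : MBoundaryN x₀ N) : ℝ :=
  1 + sInf {k : ℝ | (MEk x₀ N k a b c).Nonempty}

/-- Coarse centers of a triangle with vertices in `∂X_{x₀}^{(N)}`. -/
def MEcen {X : Type*} [MetricSpace X] (x₀ : X) (N : MorseGauge)
    (a b c : MBoundaryN x₀ N) : Set X :=
  MEk x₀ N (MKconst x₀ N a b c) a b c

/-! ### Metric-space level regularity notions -/

/-- Quasisymmetric map with control function `ψ`. -/
def QSym {X Y : Type*} [MetricSpace X] [MetricSpace Y] (f : X → Y) (ψ : ℝ → ℝ) : Prop :=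
  ∀ a b c : X, a ≠ b → a ≠ c → b ≠ c →
    dist (f a) (f b) / dist (f a) (f c) ≤ ψ (dist a b / dist a c)

/-- Bihölder map: `C⁻¹ d(x,y)^{1/α₁} ≤ d'(f x, f y)^{α₂} ≤ C d(x,y)^{α₁}`. -/
def Biholder {X Y : Type*} [MetricSpace X] [MetricSpace Y] (f : X → Y)
    (C α₁ α₂ : ℝ) : Prop :=
  ∀ x y : X, C⁻¹ * dist x y ^ (1 / α₁) ≤ dist (f x) (f y) ^ α₂ ∧
    dist (f x) (f y) ^ α₂ ≤ C * dist x y ^ α₁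

/-- Strongly quasi-conformal map: every annulus `A(x, a, ar)` is mapped into some
annulus `A(f x, v, φ(r) v)`. -/
def SQConf {X Y : Type*} [MetricSpace X] [MetricSpace Y] (f : X → Y) (φ : ℝ → ℝ) : Prop :=
  ∀ (x : X) (a r : ℝ), 0 < a → 1 ≤ r → ∃ v : ℝ, 0 < v ∧
    ∀ p : X, a ≤ dist p x → dist p x ≤ a * r →
      v ≤ dist (f p) (f x) ∧ dist (f p) (f x) ≤ φ r * v

end


noncomputable section MorseAux

private def morseS (K C D : ℝ) : ℝ := 2*D + K + C
private def morseB (K C D : ℝ) : ℝ := morseS K C D + 2*D + C + K^2*(2*D + morseS K C D + C)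

private lemma morseS_pos {K C D : ℝ} (hK : 1 ≤ K) (hC : 0 ≤ C) (hD : 1 ≤ D) :
    0 < morseS K C D := by unfold morseS; linarith

private lemma morseB_ge_S {K C D : ℝ} (hK : 1 ≤ K) (hC : 0 ≤ C) (hD : 1 ≤ D) :
    morseS K C D ≤ morseB K C D := by
  have h : 0 < 2*D + morseS K C D + C := by unfold morseS; linarith
  unfold morseB; nlinarith

private lemma abs_max_lip (a x y : ℝ) : |max a x - max a y| ≤ |x - y| := by
  rcases le_total a x with hx|hx <;> rcases le_total a y with hy|hy
  · rw [max_eq_right hx, max_eq_right hy]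
  · rw [max_eq_right hx, max_eq_left hy, abs_of_nonneg (by linarith : (0:ℝ) ≤ x - a),
      abs_of_nonneg (by linarith : (0:ℝ) ≤ x - y)]
    linarith
  · rw [max_eq_left hx, max_eq_right hy, abs_of_nonpos (by linarith : a - y ≤ 0),
      abs_of_nonpos (by linarith : x - y ≤ 0)]
    linarith
  · rw [max_eq_left hx, max_eq_left hy, sub_self, abs_zero]
    exact abs_nonneg _

private lemma abs_min_lip (a x y : ℝ) : |min a x - min a y| ≤ |x - y| := by
  rcases le_total x a with hx|hx <;> rcases le_total y a with hy|hy
  · rw [min_eq_right hx, min_eq_right hy]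
  · rw [min_eq_right hx, min_eq_left hy, abs_of_nonpos (by linarith : x - a ≤ 0),
      abs_of_nonpos (by linarith : x - y ≤ 0)]
    linarith
  · rw [min_eq_left hx, min_eq_right hy, abs_of_nonneg (by linarith : (0:ℝ) ≤ a - y),
      abs_of_nonneg (by linarith : (0:ℝ) ≤ x - y)]
    linarith
  · rw [min_eq_left hx, min_eq_left hy, sub_self, abs_zero]
    exact abs_nonneg _

private lemma core_upper {X : Type*} [MetricSpace X] {K C D : ℝ}
    (hK : 1 ≤ K) (hC : 0 ≤ C) (hD : 1 ≤ D)
    {γ α : ℝ → X} {s : Set ℝ} (hγ : ∀ x ∈ s, ∀ y ∈ s, dist (γ x) (γ y) = |x - y|)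
    {a b : ℝ} (hα : ∀ p ∈ Set.Icc a b, ∀ q ∈ Set.Icc a b,
      K⁻¹ * |p - q| - C ≤ dist (α p) (α q) ∧ dist (α p) (α q) ≤ K * |p - q| + C)
    {f : ℝ → ℝ} (hfs : ∀ r ∈ Set.Icc a b, f r ∈ s)
    (hfd : ∀ r ∈ Set.Icc a b, dist (α r) (γ (f r)) ≤ D)
    {t : ℝ} (ht : t ∈ Set.Icc a b) :
    f t ≤ max (f a) (f b) + morseB K C D := by
  classical
  by_contra hcon
  push_neg at hcon
  obtain ⟨hat, htb⟩ := ht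
  have hab : a ≤ b := le_trans hat htb
  have hK0 : (0:ℝ) < K := lt_of_lt_of_le one_pos hK
  set S := morseS K C D with hSdef
  have hS0 : 0 < S := morseS_pos hK hC hD
  set M := max (f a) (f b) with hMdef
  set v := M + S with hvdef
  have hBS : S ≤ morseB K C D := morseB_ge_S hK hC hD
  -- step bound
  have step : ∀ p ∈ Set.Icc a b, ∀ q ∈ Set.Icc a b, |p - q| ≤ 1 → |f p - f q| ≤ S := by
    intro p hp q hq hpq
    have h1 := hfd p hp
    have h2 := hfd q hq
    have h3 := (hα p hp q hq).2
    have h4 : dist (γ (f p)) (γ (f q)) = |f p - f q| := hγ _ (hfs p hp) _ (hfs q hq)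
    have h5 := dist_triangle4 (γ (f p)) (α p) (α q) (γ (f q))
    rw [dist_comm (γ (f p)) (α p)] at h5
    have h6 : K * |p - q| ≤ K := by nlinarith [abs_nonneg (p - q)]
    rw [h4] at h5
    simp only [hSdef, morseS]
    linarith
  -- left grid
  set g : ℕ → ℝ := fun i => max a (t - i) with hgdef
  have hg_mem : ∀ i, g i ∈ Set.Icc a b := by
    intro i
    refine ⟨le_max_left _ _, max_le hab ?_⟩
    have : (0:ℝ) ≤ (i:ℝ) := Nat.cast_nonneg i
    linarith
  have hg0 : g 0 = t := by simp [hgdef, max_eq_right hat]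
  have hg_le_t : ∀ i, g i ≤ t := by
    intro i
    have : (0:ℝ) ≤ (i:ℝ) := Nat.cast_nonneg i
    exact max_le hat (by linarith)
  have hgstep : ∀ i : ℕ, |g i - g (i+1)| ≤ 1 := by
    intro i
    have := abs_max_lip a (t - i) (t - (i+1:ℕ))
    have e : (t - (i:ℝ)) - (t - ((i+1:ℕ):ℝ)) = 1 := by push_cast; ring
    rw [e] at this
    simpa [hgdef] using this
  have hPg : ∃ i, f (g i) ≤ v := by
    refine ⟨⌈t - a⌉₊, ?_⟩
    have : g ⌈t - a⌉₊ = a := by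
      apply max_eq_left
      have := Nat.le_ceil (t - a)
      linarith
    rw [this]
    have : f a ≤ M := le_max_left _ _
    linarith
  set j := Nat.find hPg with hjdef
  have hj_spec : f (g j) ≤ v := Nat.find_spec hPg
  have hj_ne : j ≠ 0 := by
    intro h
    have h' := hj_spec
    rw [h, hg0] at h'
    linarith
  have hj_prev : v < f (g (j-1)) := by
    have := Nat.find_min hPg (m := j - 1) (by omega)
    push_neg at this
    exact this
  have hgjv : v - S < f (g j) := by
    have hstep := step _ (hg_mem (j-1)) _ (hg_mem j) (by
      have := hgstep (j-1)
      rwa [Nat.sub_add_cancel (Nat.one_le_iff_ne_zero.mpr hj_ne)] at this)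
    rw [abs_le] at hstep
    linarith [hstep.2]
  -- right grid
  set h : ℕ → ℝ := fun i => min b (t + i) with hhdef
  have hh_mem : ∀ i, h i ∈ Set.Icc a b := by
    intro i
    refine ⟨le_min hab ?_, min_le_left _ _⟩
    have : (0:ℝ) ≤ (i:ℝ) := Nat.cast_nonneg i
    linarith
  have hh0 : h 0 = t := by simp [hhdef, min_eq_right htb]
  have hh_ge_t : ∀ i, t ≤ h i := by
    intro i
    have : (0:ℝ) ≤ (i:ℝ) := Nat.cast_nonneg i
    exact le_min htb (by linarith)
  have hhstep : ∀ i : ℕ, |h i - h (i+1)| ≤ 1 := by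
    intro i
    have := abs_min_lip b (t + i) (t + (i+1:ℕ))
    have e : (t + (i:ℝ)) - (t + ((i+1:ℕ):ℝ)) = -1 := by push_cast; ring
    rw [e] at this
    simpa [hhdef] using this
  have hPh : ∃ i, f (h i) ≤ v := by
    refine ⟨⌈b - t⌉₊, ?_⟩
    have : h ⌈b - t⌉₊ = b := by
      apply min_eq_left
      have := Nat.le_ceil (b - t)
      linarith
    rw [this]
    have : f b ≤ M := le_max_right _ _
    linarith
  set j' := Nat.find hPh with hj'def
  have hj'_spec : f (h j') ≤ v := Nat.find_spec hPh
  have hj'_ne : j' ≠ 0 := by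
    intro heq
    have := hj'_spec
    rw [heq, hh0] at this
    linarith
  have hj'_prev : v < f (h (j'-1)) := by
    have := Nat.find_min hPh (m := j' - 1) (by omega)
    push_neg at this
    exact this
  have hhjv : v - S < f (h j') := by
    have hstep := step _ (hh_mem (j'-1)) _ (hh_mem j') (by
      have := hhstep (j'-1)
      rwa [Nat.sub_add_cancel (Nat.one_le_iff_ne_zero.mpr hj'_ne)] at this)
    rw [abs_le] at hstep
    linarith [hstep.2]
  -- main estimates
  set x := g j with hxdef
  set y := h j' with hydef
  have hx_mem := hg_mem j
  have hy_mem := hh_mem j'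
  have hxt : x ≤ t := hg_le_t j
  have hty : t ≤ y := hh_ge_t j'
  have ht' : t ∈ Set.Icc a b := ⟨hat, htb⟩
  -- dist (α x) (α y) ≤ 2D + S
  have hfxfy : |f x - f y| ≤ S := by
    rw [abs_le]; constructor <;> linarith
  have hub : dist (α x) (α y) ≤ 2*D + S := by
    have h5 := dist_triangle4 (α x) (γ (f x)) (γ (f y)) (α y)
    have h4 : dist (γ (f x)) (γ (f y)) = |f x - f y| := hγ _ (hfs x hx_mem) _ (hfs y hy_mem)
    have h1 := hfd x hx_mem
    have h2 := hfd y hy_mem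
    rw [dist_comm (γ (f y)) (α y)] at h5
    rw [h4] at h5
    linarith
  -- t - x lower bound
  have E_def : morseB K C D - S - 2*D - C = K^2*(2*D + S + C) := by
    simp only [hSdef]; unfold morseB; ring
  have hxtlow : K^2*(2*D + S + C) < K * (t - x) := by
    have h4 : dist (γ (f x)) (γ (f t)) = |f x - f t| := hγ _ (hfs x hx_mem) _ (hfs t ht')
    have h5 := dist_triangle4 (γ (f x)) (α x) (α t) (γ (f t))
    rw [dist_comm (γ (f x)) (α x)] at h5
    have h1 := hfd x hx_mem
    have h2 := hfd t ht'
    have h3 := (hα x hx_mem t ht').2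
    have habs : f t - f x ≤ |f x - f t| := by
      rw [abs_sub_comm]; exact le_abs_self _
    have habs2 : |x - t| = t - x := by rw [abs_sub_comm]; exact abs_of_nonneg (by linarith)
    rw [habs2] at h3
    rw [h4] at h5
    have : f t - f x - 2*D ≤ K * (t - x) + C := by linarith
    have hft : M + morseB K C D < f t := hcon
    have hfx : f x ≤ v := hj_spec
    -- f t - f x > M + B - (M + S) = B - S
    have : morseB K C D - S - 2*D - C < K * (t - x) := by linarith
    linarith [E_def ▸ this]
  have hytlow : K^2*(2*D + S + C) < K * (y - t) := by
    have h4 : dist (γ (f y)) (γ (f t)) = |f y - f t| := hγ _ (hfs y hy_mem) _ (hfs t ht')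
    have h5 := dist_triangle4 (γ (f y)) (α y) (α t) (γ (f t))
    rw [dist_comm (γ (f y)) (α y)] at h5
    have h1 := hfd y hy_mem
    have h2 := hfd t ht'
    have h3 := (hα y hy_mem t ht').2
    have habs : f t - f y ≤ |f y - f t| := by
      rw [abs_sub_comm]; exact le_abs_self _
    have habs2 : |y - t| = y - t := abs_of_nonneg (by linarith)
    rw [habs2] at h3
    rw [h4] at h5
    have hft : M + morseB K C D < f t := hcon
    have hfy : f y ≤ v := hj'_spec
    have : morseB K C D - S - 2*D - C < K * (y - t) := by linarith
    linarith [E_def ▸ this]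
  -- lower quasi bound contradiction
  have hlow := (hα x hx_mem y hy_mem).1
  have habs3 : |x - y| = y - x := by rw [abs_sub_comm]; exact abs_of_nonneg (by linarith)
  rw [habs3] at hlow
  have hKinv : K * K⁻¹ = 1 := mul_inv_cancel₀ (ne_of_gt hK0)
  -- K⁻¹ * (y-x) ≤ 2D + S + C  →  y - x ≤ K*(2D+S+C)
  have h7 : K⁻¹ * (y - x) ≤ 2*D + S + C := by linarith
  have h8 : y - x ≤ K * (2*D + S + C) := by
    have := mul_le_mul_of_nonneg_left h7 (le_of_lt hK0)
    calc y - x = K * (K⁻¹ * (y - x)) := by rw [← mul_assoc, hKinv, one_mul]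
      _ ≤ K * (2*D + S + C) := this
  have h9 : K * (y - x) ≤ K^2 * (2*D + S + C) := by
    calc K * (y - x) ≤ K * (K * (2*D + S + C)) :=
          mul_le_mul_of_nonneg_left h8 (le_of_lt hK0)
      _ = K^2 * (2*D + S + C) := by ring
  have h10 : 2 * (K^2*(2*D + S + C)) < K * (y - x) := by
    have e : K*(t - x) + K*(y - t) = K*(y - x) := by ring
    linarith
  have hpos : 0 < K^2*(2*D + S + C) := by positivity
  linarith

private lemma core_lower {X : Type*} [MetricSpace X] {K C D : ℝ}
    (hK : 1 ≤ K) (hC : 0 ≤ C) (hD : 1 ≤ D)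
    {γ α : ℝ → X} {s : Set ℝ} (hγ : ∀ x ∈ s, ∀ y ∈ s, dist (γ x) (γ y) = |x - y|)
    {a b : ℝ} (hα : ∀ p ∈ Set.Icc a b, ∀ q ∈ Set.Icc a b,
      K⁻¹ * |p - q| - C ≤ dist (α p) (α q) ∧ dist (α p) (α q) ≤ K * |p - q| + C)
    {f : ℝ → ℝ} (hfs : ∀ r ∈ Set.Icc a b, f r ∈ s)
    (hfd : ∀ r ∈ Set.Icc a b, dist (α r) (γ (f r)) ≤ D)
    {t : ℝ} (ht : t ∈ Set.Icc a b) :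
    min (f a) (f b) - morseB K C D ≤ f t := by
  have hγ' : ∀ x ∈ (fun x : ℝ => -x) ⁻¹' s, ∀ y ∈ (fun x : ℝ => -x) ⁻¹' s,
      dist ((fun x => γ (-x)) x) ((fun x => γ (-x)) y) = |x - y| := by
    intro x hx y hy
    show dist (γ (-x)) (γ (-y)) = |x - y|
    rw [hγ _ hx _ hy, show -x - -y = -(x - y) by ring, abs_neg]
  have hfs' : ∀ r ∈ Set.Icc a b, (fun r => -(f r)) r ∈ (fun x : ℝ => -x) ⁻¹' s := by
    intro r hr
    show -(-(f r)) ∈ s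
    rw [neg_neg]
    exact hfs r hr
  have hfd' : ∀ r ∈ Set.Icc a b, dist (α r) ((fun x => γ (-x)) ((fun r => -(f r)) r)) ≤ D := by
    intro r hr
    show dist (α r) (γ (-(-(f r)))) ≤ D
    rw [neg_neg]
    exact hfd r hr
  have key : -(f t) ≤ max (-(f a)) (-(f b)) + morseB K C D :=
    core_upper hK hC hD hγ' hα hfs' hfd' ht
  rw [max_neg_neg] at key
  linarith

end MorseAux

/-- any subsegment of an `N`-Morse geodesic is `N'`-Morse, with `N'`
depending only on `N`. -/

theorem segment_of_morse_is_morse (N : MorseGauge) :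
    ∃ N' : MorseGauge,
      ∀ (X : Type) [inst : MetricSpace X], GeodesicSpace X →
        ∀ (γ : ℝ → X) (s : Set ℝ), IsGeodesicOn γ s → IsMorseOn N γ s →
          ∀ c d : ℝ, Set.Icc c d ⊆ s → IsMorseOn N' γ (Set.Icc c d) := by
  classical
  refine ⟨fun K C => 2*(N K C + 1) + morseB K C (N K C + 1), ?_⟩
  intro X _ _hgeo γ s hγ hM c d hsub K C hK hC a b hab α hα ha hb t ht
  obtain ⟨c₁, hc₁, hca⟩ := ha
  obtain ⟨d₁, hd₁, hdb⟩ := hb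
  have hcd : c ≤ d := le_trans hc₁.1 hc₁.2
  have ha' : α a ∈ γ '' s := ⟨c₁, hsub hc₁, hca⟩
  have hb' : α b ∈ γ '' s := ⟨d₁, hsub hd₁, hdb⟩
  have hMain := hM K C hK hC a b hab α hα ha' hb'
  have hamem : a ∈ Set.Icc a b := ⟨le_refl a, hab⟩
  have hbmem : b ∈ Set.Icc a b := ⟨hab, le_refl b⟩
  have hne : (γ '' s).Nonempty := ⟨α a, ha'⟩
  have hN0 : 0 ≤ N K C := le_trans Metric.infDist_nonneg (hMain a hamem)
  set D := N K C + 1 with hDdef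
  have hD1 : 1 ≤ D := by linarith
  have hch : ∀ r : ℝ, ∃ u : ℝ, r ∈ Set.Icc a b → (u ∈ s ∧ dist (α r) (γ u) ≤ D) := by
    intro r
    by_cases hr : r ∈ Set.Icc a b
    · have h1 : Metric.infDist (α r) (γ '' s) < D :=
        lt_of_le_of_lt (hMain r hr) (by linarith)
      obtain ⟨z, hz, hzd⟩ := (Metric.infDist_lt_iff hne).mp h1
      obtain ⟨u, hu, rfl⟩ := hz
      exact ⟨u, fun _ => ⟨hu, le_of_lt hzd⟩⟩
    · exact ⟨0, fun h => absurd h hr⟩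
  choose f hf using hch
  have hfs : ∀ r ∈ Set.Icc a b, f r ∈ s := fun r hr => (hf r hr).1
  have hfd : ∀ r ∈ Set.Icc a b, dist (α r) (γ (f r)) ≤ D := fun r hr => (hf r hr).2
  have hup := core_upper hK hC hD1 hγ hα hfs hfd ht
  have hlo := core_lower hK hC hD1 hγ hα hfs hfd ht
  have hB0 : 0 ≤ morseB K C D :=
    le_trans (le_of_lt (morseS_pos hK hC hD1)) (morseB_ge_S hK hC hD1)
  have hfa : |f a - c₁| ≤ D := by
    have h4 : dist (γ (f a)) (γ c₁) = |f a - c₁| := hγ _ (hfs a hamem) _ (hsub hc₁)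
    have h1 := hfd a hamem
    rw [← hca] at h1
    rw [← h4, dist_comm]
    exact h1
  have hfb : |f b - d₁| ≤ D := by
    have h4 : dist (γ (f b)) (γ d₁) = |f b - d₁| := hγ _ (hfs b hbmem) _ (hsub hd₁)
    have h1 := hfd b hbmem
    rw [← hdb] at h1
    rw [← h4, dist_comm]
    exact h1
  rw [abs_le] at hfa hfb
  have hmaxle : max (f a) (f b) ≤ d + D :=
    max_le (by linarith [hc₁.2]) (by linarith [hd₁.2])
  have hminge : c - D ≤ min (f a) (f b) :=
    le_min (by linarith [hc₁.1]) (by linarith [hd₁.1])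
  have hub' : f t ≤ d + D + morseB K C D := by linarith
  have hlb' : c - D - morseB K C D ≤ f t := by linarith
  set w := min d (max c (f t)) with hwdef
  have hwc : c ≤ w := le_min hcd (le_max_left _ _)
  have hwd : w ≤ d := min_le_left _ _
  have habsw : |f t - w| ≤ D + morseB K C D := by
    rcases le_total (f t) d with h1|h1
    · rcases le_total c (f t) with h2|h2
      · have hw : w = f t := by rw [hwdef, max_eq_right h2, min_eq_right h1]
        rw [hw, sub_self, abs_zero]
        linarith
      · have hw : w = c := by rw [hwdef, max_eq_left h2, min_eq_right hcd]
        rw [hw, abs_of_nonpos (by linarith)]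
        linarith
    · have hw : w = d := by
        rw [hwdef, max_eq_right (by linarith : c ≤ f t), min_eq_left h1]
      rw [hw, abs_of_nonneg (by linarith)]
      linarith
  have hwmem : w ∈ Set.Icc c d := ⟨hwc, hwd⟩
  have h4 : dist (γ (f t)) (γ w) = |f t - w| := hγ _ (hfs t ht) _ (hsub hwmem)
  have hdw : dist (α t) (γ w) ≤ D + (D + morseB K C D) := by
    have htri := dist_triangle (α t) (γ (f t)) (γ w)
    rw [h4] at htri
    linarith [hfd t ht]
  calc infDist (α t) (γ '' Set.Icc c d) ≤ dist (α t) (γ w) :=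
        Metric.infDist_le_dist_of_mem ⟨w, hwmem, rfl⟩
    _ ≤ 2*D + morseB K C D := by linarith
end

section
/- Let $f\colon(X_1,d_1)\to(X_2,d_2)$ be strongly quasi-conformal with function $\phi$, suppose $\operatorname{diam}(X_1)\leq1$, and let $a_1,b_1,a_2,b_2,c_2\in X_1$ with $d_1(a_2,c_2),d_1(b_2,c_2)\geq u$, $d_1(a_1,c_2),d_1(b_1,c_2)\geq u/3$, and $d_2(f(a_1),f(b_1))\geq u'>0$. Then $d_2(f(a_2),f(c_2))\geq u'/(2\phi(3/u))$ and $d_2(f(b_2),f(c_2))\geq u'/(2\phi(3/u))$. -/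
open Metric Set Filter

/-- separation of image points under a strongly quasi-conformal map. -/
theorem strongly_quasiconformal_separation {X Y : Type*} [MetricSpace X] [MetricSpace Y]
    (f : X → Y) (φ : ℝ → ℝ) (hφ : ∀ r, 1 ≤ r → 1 ≤ φ r) (hsqc : SQConf f φ)
    (hdiam : ∀ p q : X, dist p q ≤ 1)
    (a₁ b₁ a₂ b₂ c₂ : X) (u u' : ℝ) (hu : 0 < u) (hu' : 0 < u')
    (h₁ : u ≤ dist a₂ c₂) (h₂ : u ≤ dist b₂ c₂)
    (h₃ : u / 3 ≤ dist a₁ c₂) (h₄ : u / 3 ≤ dist b₁ c₂)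
    (h₅ : u' ≤ dist (f a₁) (f b₁)) :
    u' / (2 * φ (3 / u)) ≤ dist (f a₂) (f c₂) ∧
      u' / (2 * φ (3 / u)) ≤ dist (f b₂) (f c₂) := by
  have hu1 : u ≤ 1 := h₁.trans (hdiam _ _)
  have hr : (1:ℝ) ≤ 3 / u := by
    rw [le_div_iff₀ hu]; linarith
  obtain ⟨v, hv, hA⟩ := hsqc c₂ (u / 3) (3 / u) (by positivity) hr
  have har : u / 3 * (3 / u) = 1 := by field_simp
  have key : ∀ p : X, u / 3 ≤ dist p c₂ → v ≤ dist (f p) (f c₂) ∧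
      dist (f p) (f c₂) ≤ φ (3 / u) * v := fun p hp =>
    hA p hp (by rw [har]; exact hdiam _ _)
  have ha₁ := key a₁ h₃
  have hb₁ := key b₁ h₄
  have ha₂ := key a₂ (le_trans (by linarith) h₁)
  have hb₂ := key b₂ (le_trans (by linarith) h₂)
  have htri : u' ≤ 2 * (φ (3 / u) * v) := by
    calc u' ≤ dist (f a₁) (f b₁) := h₅
    _ ≤ dist (f a₁) (f c₂) + dist (f c₂) (f b₁) := dist_triangle _ _ _
    _ = dist (f a₁) (f c₂) + dist (f b₁) (f c₂) := by rw [dist_comm (f c₂)]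
    _ ≤ 2 * (φ (3 / u) * v) := by linarith [ha₁.2, hb₁.2]
  have hφpos : 0 < φ (3 / u) := lt_of_lt_of_le one_pos (hφ _ hr)
  have hv' : u' / (2 * φ (3 / u)) ≤ v := by
    rw [div_le_iff₀ (by positivity)]; linarith
  exact ⟨hv'.trans ha₂.1, hv'.trans hb₂.1⟩
end
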